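/- Let a_1,...,a_k and b_1,...,b_k be positive integers such that the rational function ∏_{i=1}^k [a_i]_q / [b_i]_q is a polynomial in q with nonnegative coefficients, and let X be the random variable whose distribution is proportional to the coefficients of this polynomial. Then for r ≥ 1, the r-th cumulant of X equals (B_r / r) * Σ_{i=1}^k (a_i^r - b_i^r). -/

import Mathlib

open Polynomial

/-- The `q`-integer `[n]_q = 1 + q + ⋯ + q^{n-1}` as a polynomial over `ℚ`. -/
noncomputable def qInt (n : ℕ) : Polynomial ℚ :=
  ∑ j ∈ Finset.range n, Polynomial.X ^ j

/-- The cumulant generating function of the random variable whose distribution is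
proportional to the coefficients of the polynomial `F`:
`t ↦ log (Σ_j F_j e^{t j}) − log (Σ_j F_j)`. -/
noncomputable def polyCGF (F : Polynomial ℚ) (t : ℝ) : ℝ :=
  Real.log (∑ j ∈ Finset.range (F.natDegree + 1), (F.coeff j : ℝ) * Real.exp (t * j))
    - Real.log ((F.eval 1 : ℚ) : ℝ)

/-- The `r`-th cumulant of the distribution given by the coefficients of `F`. -/
noncomputable def polyCumulant (r : ℕ) (F : Polynomial ℚ) : ℝ :=
  iteratedDeriv r (polyCGF F) 0


open Finset Filter
open scoped ContDiff

noncomputable def cG : ℕ → ℝ := fun n => ((n+1).factorial : ℝ)⁻¹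

noncomputable def pG : FormalMultilinearSeries ℝ ℝ ℝ := FormalMultilinearSeries.ofScalars ℝ cG

noncomputable def G : ℝ → ℝ := pG.sum

lemma pG_radius : pG.radius = ⊤ := by
  apply FormalMultilinearSeries.ofScalars_radius_eq_top_of_tendsto
  · exact Eventually.of_forall fun n => show ((n+1).factorial:ℝ)⁻¹ ≠ 0 by positivity
  · have h : (fun n : ℕ => ‖cG (n+1)‖ / ‖cG n‖) = fun n : ℕ => 1 / ((n:ℝ) + 2) := by
      funext n
      have h1 : (0:ℝ) < (n+1).factorial := by positivity
      show (‖((n+1+1).factorial : ℝ)⁻¹‖ / ‖((n+1).factorial : ℝ)⁻¹‖) = _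
      rw [Real.norm_eq_abs, Real.norm_eq_abs, abs_of_pos (by positivity), abs_of_pos (by positivity)]
      rw [show (n+1+1).factorial = (n+2) * (n+1).factorial from rfl]
      push_cast
      field_simp
    rw [show (fun n : ℕ => ‖cG n.succ‖ / ‖cG n‖) = fun n : ℕ => ‖cG (n+1)‖ / ‖cG n‖ from rfl, h]
    have := (tendsto_one_div_add_atTop_nhds_zero_nat (𝕜 := ℝ)).comp (tendsto_add_atTop_nat 1)
    convert this using 2 with n
    simp [Function.comp]
    push_cast
    ring

lemma hG_ball : HasFPowerSeriesOnBall G pG 0 ⊤ := by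
  have := pG.hasFPowerSeriesOnBall (by rw [pG_radius]; exact ENNReal.zero_lt_top)
  rwa [pG_radius] at this

lemma G_analytic (x : ℝ) : AnalyticAt ℝ G x :=
  hG_ball.analyticAt_of_mem (by simp)

lemma G_contDiff : ContDiff ℝ ∞ G :=
  (AnalyticOnNhd.contDiff (fun x _ => G_analytic x))

lemma G_tsum (t : ℝ) : G t = ∑' n, cG n * t ^ n := by
  refine tsum_congr fun n => ?_
  simp only [pG]
  rw [FormalMultilinearSeries.ofScalars_apply_eq, smul_eq_mul]

lemma mul_G (t : ℝ) : t * G t = Real.exp t - 1 := by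
  have hexp : Real.exp t = ∑' n, t ^ n / n.factorial := by
    rw [Real.exp_eq_exp_ℝ, NormedSpace.exp_eq_tsum_div]
  have hsum := Real.summable_pow_div_factorial t
  have hsplit := (Summable.tsum_eq_zero_add hsum)
  rw [G_tsum, ← tsum_mul_left]
  have : ∀ n : ℕ, t * (cG n * t ^ n) = t ^ (n+1) / (n+1).factorial := by
    intro n
    show t * (((n+1).factorial : ℝ)⁻¹ * t ^ n) = _
    rw [div_eq_mul_inv]
    ring
  rw [tsum_congr this, hexp, hsplit]
  simp

lemma G_zero : G 0 = 1 := by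
  rw [G_tsum]
  rw [tsum_eq_single 0 (fun n hn => by
    rw [zero_pow hn, mul_zero])]
  show ((0+1).factorial : ℝ)⁻¹ * 0 ^ 0 = 1
  norm_num

lemma G_pos (t : ℝ) : 0 < G t := by
  rcases lt_trichotomy t 0 with h | rfl | h
  · have h1 : G t = (Real.exp t - 1) / t := by
      rw [eq_div_iff h.ne, mul_comm, mul_G]
    rw [h1]
    apply div_pos_of_neg_of_neg _ h
    have : Real.exp t < 1 := by rw [← Real.exp_zero]; exact Real.exp_lt_exp.mpr h
    linarith
  · rw [G_zero]; norm_num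
  · have h1 : G t = (Real.exp t - 1) / t := by
      rw [eq_div_iff h.ne', mul_comm, mul_G]
    rw [h1]
    apply div_pos _ h
    have : 1 < Real.exp t := by rw [← Real.exp_zero]; exact Real.exp_lt_exp.mpr h
    linarith

noncomputable def L : ℝ → ℝ := fun t => Real.log (G t)

lemma L_contDiff : ContDiff ℝ ∞ L :=
  contDiff_iff_contDiffAt.2 fun x =>
    (Real.contDiffAt_log.2 (G_pos x).ne').comp x G_contDiff.contDiffAt

lemma G_diff (t : ℝ) : DifferentiableAt ℝ G t :=
  (G_contDiff.differentiable (by simp)).differentiableAt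

lemma G_add_deriv (t : ℝ) : G t + t * deriv G t = Real.exp t := by
  have h1 : HasDerivAt (fun t => t * G t) (1 * G t + t * deriv G t) t :=
    (hasDerivAt_id t).mul (G_diff t).hasDerivAt
  have h2 : HasDerivAt (fun t => Real.exp t - 1) (Real.exp t) t :=
    (Real.hasDerivAt_exp t).sub_const 1
  have h3 : (fun t => t * G t) = fun t => Real.exp t - 1 := funext mul_G
  rw [h3] at h1
  have := h1.unique h2
  rw [← this]; ring

lemma deriv_L (t : ℝ) : deriv L t = deriv G t / G t :=
  (((G_diff t).hasDerivAt).log (G_pos t).ne').deriv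

noncomputable def M : ℝ → ℝ := fun t => 1 + t * deriv L t

lemma M_contDiff : ContDiff ℝ ∞ M := by
  have h := (contDiff_infty_iff_deriv.mp L_contDiff).2
  exact contDiff_const.add (contDiff_id.mul h)

lemma M_zero : M 0 = 1 := by simp [M]

lemma M_key (t : ℝ) : M t * Real.exp t = M t + t * Real.exp t := by
  have hg := (G_pos t).ne'
  have h1 := mul_G t
  have h2 := G_add_deriv t
  have h4 : deriv L t * G t = deriv G t := by rw [deriv_L]; field_simp
  show (1 + t * deriv L t) * Real.exp t = (1 + t * deriv L t) + t * Real.exp t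
  linear_combination (-(1 + t * deriv L t)) * h1 + t * h2 + t^2 * h4

-- global versions of iteratedDeriv lemmas
lemma itD_add {n : ℕ} {f g : ℝ → ℝ} (hf : ContDiff ℝ ∞ f) (hg : ContDiff ℝ ∞ g) (x : ℝ) :
    iteratedDeriv n (fun y => f y + g y) x = iteratedDeriv n f x + iteratedDeriv n g x := by
  simp only [← iteratedDerivWithin_univ]
  exact iteratedDerivWithin_add (Set.mem_univ x) uniqueDiffOn_univ
    ((hf.of_le (by exact_mod_cast le_top)).contDiffWithinAt) ((hg.of_le (by exact_mod_cast le_top)).contDiffWithinAt)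

lemma itD_sub {n : ℕ} {f g : ℝ → ℝ} (hf : ContDiff ℝ ∞ f) (hg : ContDiff ℝ ∞ g) (x : ℝ) :
    iteratedDeriv n (fun y => f y - g y) x = iteratedDeriv n f x - iteratedDeriv n g x := by
  simp only [← iteratedDerivWithin_univ]
  exact iteratedDerivWithin_sub (Set.mem_univ x) uniqueDiffOn_univ
    ((hf.of_le (by exact_mod_cast le_top)).contDiffWithinAt) ((hg.of_le (by exact_mod_cast le_top)).contDiffWithinAt)

lemma itD_zero_fun (n : ℕ) : iteratedDeriv n (fun _ : ℝ => (0:ℝ)) = fun _ => 0 := by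
  induction n with
  | zero => simp [iteratedDeriv_zero]
  | succ n ih => rw [iteratedDeriv_succ, ih]; funext x; simp

lemma itD_const_fun (n : ℕ) (c : ℝ) :
    iteratedDeriv (n+1) (fun _ : ℝ => c) = fun _ => 0 := by
  induction n with
  | zero => rw [iteratedDeriv_one]; funext x; simp
  | succ n ih => rw [iteratedDeriv_succ, ih]; funext x; simp

lemma itD_sum {ι : Type*} [DecidableEq ι] (s : Finset ι) (f : ι → ℝ → ℝ) (hf : ∀ i ∈ s, ContDiff ℝ ∞ (f i))
    (n : ℕ) (x : ℝ) :
    iteratedDeriv n (fun t => ∑ i ∈ s, f i t) x = ∑ i ∈ s, iteratedDeriv n (f i) x := by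
  induction s using Finset.induction with
  | empty => simp [itD_zero_fun n]
  | insert j s' hni ih =>
    simp only [Finset.sum_insert hni]
    have h1 : ContDiff ℝ ∞ (fun t => ∑ i ∈ s', f i t) :=
      ContDiff.sum fun i hi => hf i (Finset.mem_insert_of_mem hi)
    have : iteratedDeriv n (fun t => f j t + ∑ i ∈ s', f i t) x
        = iteratedDeriv n (f j) x + iteratedDeriv n (fun t => ∑ i ∈ s', f i t) x :=
      itD_add (hf j (Finset.mem_insert_self _ _)) h1 x
    rw [this, ih (fun i hi => hf i (Finset.mem_insert_of_mem hi))]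

lemma choose_sum_aux (u : ℕ → ℝ) (n : ℕ) :
    ∑ j ∈ Finset.range (n+1), (n.choose j : ℝ) * u (j+1)
      + ∑ j ∈ Finset.range (n+1), (n.choose j : ℝ) * u j
      = ∑ j ∈ Finset.range (n+2), ((n+1).choose j : ℝ) * u j := by
  rw [Finset.sum_range_succ' (fun j => ((n+1).choose j : ℝ) * u j) (n+1)]
  have h1 : ∀ j, (((n+1).choose (j+1) : ℕ) : ℝ) = (n.choose j : ℝ) + (n.choose (j+1) : ℝ) := by
    intro j; rw [Nat.choose_succ_succ]; push_cast; ring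
  have h2 : ∑ j ∈ Finset.range (n+1), (((n+1).choose (j+1) : ℕ) : ℝ) * u (j+1)
      = ∑ j ∈ Finset.range (n+1), ((n.choose j : ℝ) * u (j+1) + (n.choose (j+1) : ℝ) * u (j+1)) := by
    refine Finset.sum_congr rfl fun j _ => ?_
    rw [h1]; ring
  rw [h2, Finset.sum_add_distrib]
  have h3 : ∑ j ∈ Finset.range (n+1), (n.choose (j+1) : ℝ) * u (j+1) + (n.choose 0 : ℝ) * u 0
      = ∑ j ∈ Finset.range (n+2), (n.choose j : ℝ) * u j := by
    rw [Finset.sum_range_succ' (fun j => (n.choose j : ℝ) * u j) (n+1)]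
  have h4 : ∑ j ∈ Finset.range (n+2), (n.choose j : ℝ) * u j
      = ∑ j ∈ Finset.range (n+1), (n.choose j : ℝ) * u j := by
    rw [Finset.sum_range_succ]
    simp [Nat.choose_succ_self]
  simp only [Nat.choose_zero_right, Nat.cast_one, one_mul] at h3 ⊢
  linarith [h3, h4]

lemma contDiff_nat_of_infty {f : ℝ → ℝ} (hf : ContDiff ℝ ∞ f) (n : ℕ) : ContDiff ℝ n f :=
  hf.of_le (by exact_mod_cast le_top)

lemma diff_itD {f : ℝ → ℝ} (hf : ContDiff ℝ ∞ f) (j : ℕ) :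
    Differentiable ℝ (iteratedDeriv j f) := by
  apply hf.differentiable_iteratedDeriv
  exact WithTop.coe_lt_coe.mpr (WithTop.coe_lt_top j)

lemma itD_mul_exp (f : ℝ → ℝ) (hf : ContDiff ℝ ∞ f) (n : ℕ) :
    iteratedDeriv n (fun t => f t * Real.exp t)
      = fun x => (∑ j ∈ Finset.range (n+1), (n.choose j : ℝ) * iteratedDeriv j f x) * Real.exp x := by
  induction n with
  | zero => simp [iteratedDeriv_zero]
  | succ n ih =>
    rw [iteratedDeriv_succ, ih]
    funext x
    have hsum : HasDerivAt (fun y => ∑ j ∈ Finset.range (n+1), (n.choose j : ℝ) * iteratedDeriv j f y)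
        (∑ j ∈ Finset.range (n+1), (n.choose j : ℝ) * iteratedDeriv (j+1) f x) x := by
      refine HasDerivAt.fun_sum fun j _ => ?_
      have hd : HasDerivAt (iteratedDeriv j f) (iteratedDeriv (j+1) f x) x := by
        rw [iteratedDeriv_succ]
        exact ((diff_itD hf j x).hasDerivAt).congr_deriv rfl
      exact hd.const_mul _
    have h := (hsum.fun_mul (Real.hasDerivAt_exp x)).deriv
    rw [h]
    have := choose_sum_aux (fun j => iteratedDeriv j f x) n
    rw [show (n+1+1) = n+2 from rfl]
    rw [← this]
    ring

lemma itD_id_mul (g : ℝ → ℝ) (hg : ContDiff ℝ ∞ g) (n : ℕ) :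
    iteratedDeriv (n+1) (fun t => t * g t)
      = fun x => ((n:ℝ)+1) * iteratedDeriv n g x + x * iteratedDeriv (n+1) g x := by
  induction n with
  | zero =>
    rw [iteratedDeriv_one]
    funext x
    have h : HasDerivAt (fun t => t * g t) (1 * g x + x * deriv g x) x :=
      (hasDerivAt_id x).mul ((hg.differentiable (by simp)) x).hasDerivAt
    rw [h.deriv, iteratedDeriv_zero, iteratedDeriv_one]
    ring
  | succ n ih =>
    rw [iteratedDeriv_succ, ih]
    funext x
    have h1 : HasDerivAt (fun y => ((n:ℝ)+1) * iteratedDeriv n g y) (((n:ℝ)+1) * iteratedDeriv (n+1) g x) x := by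
      have hd : HasDerivAt (iteratedDeriv n g) (iteratedDeriv (n+1) g x) x := by
        rw [iteratedDeriv_succ]; exact (diff_itD hg n x).hasDerivAt
      exact hd.const_mul _
    have h2 : HasDerivAt (fun y => y * iteratedDeriv (n+1) g y)
        (1 * iteratedDeriv (n+1) g x + x * iteratedDeriv (n+2) g x) x := by
      have hd : HasDerivAt (iteratedDeriv (n+1) g) (iteratedDeriv (n+2) g x) x := by
        rw [show iteratedDeriv (n+2) g = deriv (iteratedDeriv (n+1) g) from iteratedDeriv_succ]
        exact (diff_itD hg (n+1) x).hasDerivAt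
      exact (hasDerivAt_id x).mul hd
    have h := (h1.fun_add h2).deriv
    rw [h]
    push_cast
    ring

lemma itD_id (j : ℕ) (x : ℝ) :
    iteratedDeriv j (fun y : ℝ => y) x = if j = 0 then x else if j = 1 then 1 else 0 := by
  match j with
  | 0 => simp [iteratedDeriv_zero]
  | 1 => rw [iteratedDeriv_one]; simp
  | (j+2) =>
    rw [iteratedDeriv_succ', show deriv (fun y : ℝ => y) = fun _ => (1:ℝ) from funext fun y => deriv_id y]
    rw [itD_const_fun j 1]
    simp

lemma itD_t_exp (n : ℕ) (hn : 1 ≤ n) :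
    iteratedDeriv n (fun t : ℝ => t * Real.exp t) 0 = n := by
  rw [itD_mul_exp (fun y => y) contDiff_id n]
  simp only [Real.exp_zero, mul_one]
  have : ∀ j ∈ Finset.range (n+1), (n.choose j : ℝ) * iteratedDeriv j (fun y : ℝ => y) 0
      = if j = 1 then (n:ℝ) else 0 := by
    intro j hj
    rw [itD_id]
    rcases j with - | j
    · simp
    rcases j with - | j
    · simp
    · simp
  rw [Finset.sum_congr rfl this, Finset.sum_ite_eq' (Finset.range (n+1)) 1 (fun _ => (n:ℝ))]
  simp [Finset.mem_range, Nat.lt_succ_of_le hn]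

noncomputable def m : ℕ → ℝ := fun n => iteratedDeriv n M 0

lemma t_exp_contDiff : ContDiff ℝ ∞ (fun t : ℝ => t * Real.exp t) :=
  contDiff_id.mul Real.contDiff_exp

lemma m_rec (n : ℕ) (hn : 1 ≤ n) :
    ∑ j ∈ Finset.range n, (n.choose j : ℝ) * m j = n := by
  have hkey : (fun t => M t * Real.exp t) = fun t => M t + t * Real.exp t := funext M_key
  have h1 : iteratedDeriv n (fun t => M t * Real.exp t) 0
      = ∑ j ∈ Finset.range (n+1), (n.choose j : ℝ) * m j := by
    rw [itD_mul_exp M M_contDiff n]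
    simp only [Real.exp_zero, mul_one]
    rfl
  have h2 : iteratedDeriv n (fun t => M t + t * Real.exp t) 0
      = m n + n := by
    rw [itD_add M_contDiff t_exp_contDiff 0, itD_t_exp n hn]
    rfl
  have h3 : (∑ j ∈ Finset.range (n+1), (n.choose j : ℝ) * m j) = m n + n := by
    rw [← h1, hkey, h2]
  rw [Finset.sum_range_succ] at h3
  simp only [Nat.choose_self, Nat.cast_one, one_mul] at h3
  linarith

lemma m_eq_bernoulli' : ∀ n : ℕ, m n = (bernoulli' n : ℝ) := by
  intro n
  induction n using Nat.strong_induction_on with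
  | _ n ih =>
    match n with
    | 0 =>
      show iteratedDeriv 0 M 0 = _
      rw [iteratedDeriv_zero, M_zero, bernoulli'_zero]
      norm_num
    | (s+1) =>
      have h1 := m_rec (s+2) (by omega)
      have h2 := congrArg (fun q : ℚ => (q : ℝ)) (sum_bernoulli' (s+2))
      push_cast at h2
      rw [Finset.sum_range_succ] at h1 h2
      have h4 : ∑ j ∈ Finset.range (s+1), ((s+2).choose j : ℝ) * m j
          = ∑ j ∈ Finset.range (s+1), ((s+2).choose j : ℝ) * (bernoulli' j : ℝ) := by
        refine Finset.sum_congr rfl fun j hj => ?_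
        rw [ih j (by simpa using Finset.mem_range.mp hj)]
      push_cast at h1 h4
      have h5 : ((s+2).choose (s+1) : ℝ) * m (s+1) = ((s+2).choose (s+1) : ℝ) * (bernoulli' (s+1) : ℝ) := by
        push_cast
        linarith [h1, h2, h4]
      have h6 : ((s+2).choose (s+1) : ℝ) ≠ 0 := by
        rw [Nat.choose_succ_self_right]
        positivity
      exact mul_left_cancel₀ h6 h5

lemma itD_L (r : ℕ) (hr : 1 ≤ r) :
    iteratedDeriv r L 0 = (bernoulli' r : ℝ) / r := by
  obtain ⟨s, rfl⟩ := Nat.exists_eq_add_of_le hr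
  have hdL : ContDiff ℝ ∞ (deriv L) := (contDiff_infty_iff_deriv.mp L_contDiff).2
  have h1 : m (1+s) = ((s:ℝ)+1) * iteratedDeriv (1+s) L 0 := by
    show iteratedDeriv (1+s) M 0 = _
    have hM : M = fun t => (1:ℝ) + t * deriv L t := rfl
    rw [hM]
    rw [show (1+s) = s+1 from by omega]
    rw [itD_add (f := fun _ => (1:ℝ)) (g := fun t => t * deriv L t) contDiff_const
      (contDiff_id.mul hdL) 0]
    rw [itD_const_fun s 1]
    rw [itD_id_mul (deriv L) hdL s]
    have h7 : iteratedDeriv (s+1) L 0 = iteratedDeriv s (deriv L) 0 := by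
      rw [iteratedDeriv_succ']
    simp [h7]
  have h2 := m_eq_bernoulli' (1+s)
  rw [h1] at h2
  have hne : ((1+s : ℕ) : ℝ) ≠ 0 := by positivity
  rw [eq_div_iff hne]
  push_cast
  linear_combination h2

lemma qInt_eval_real (n : ℕ) (x : ℝ) :
    ((qInt n).map (algebraMap ℚ ℝ)).eval x = ∑ j ∈ Finset.range n, x ^ j := by
  rw [qInt, Polynomial.map_sum]
  rw [Polynomial.eval_finset_sum]
  refine Finset.sum_congr rfl fun j _ => ?_
  rw [Polynomial.map_pow, Polynomial.map_X, Polynomial.eval_pow, Polynomial.eval_X]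

lemma qInt_eval_one (n : ℕ) : (qInt n).eval 1 = n := by
  rw [qInt, Polynomial.eval_finset_sum]
  simp

lemma G_fact (n : ℕ) (t : ℝ) :
    G t * (∑ j ∈ Finset.range n, (Real.exp t) ^ j) = (n : ℝ) * G ((n:ℝ) * t) := by
  rcases eq_or_ne t 0 with rfl | ht
  · simp [G_zero]
  · apply mul_left_cancel₀ ht
    have hg : (∑ j ∈ Finset.range n, (Real.exp t) ^ j) * (Real.exp t - 1)
        = (Real.exp t) ^ n - 1 := geom_sum_mul (Real.exp t) n
    have h1 : t * (G t * (∑ j ∈ Finset.range n, (Real.exp t) ^ j))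
        = (Real.exp t) ^ n - 1 := by
      rw [← mul_assoc] at *
      rw [show t * G t * (∑ j ∈ Finset.range n, (Real.exp t) ^ j)
          = (∑ j ∈ Finset.range n, (Real.exp t) ^ j) * (t * G t) by ring, mul_G, hg]
    rw [h1]
    have h2 : ((n:ℝ) * t) * G ((n:ℝ)*t) = Real.exp ((n:ℝ)*t) - 1 := mul_G _
    have h3 : Real.exp ((n:ℝ)*t) = (Real.exp t) ^ n := Real.exp_nat_mul t n
    rw [h3] at h2
    rw [show t * ((n:ℝ) * G ((n:ℝ)*t)) = ((n:ℝ)*t) * G ((n:ℝ)*t) by ring, h2]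

section main

variable {k : ℕ} (a b : Fin k → ℕ) (F : Polynomial ℚ)

lemma Sval_eq (t : ℝ) :
    (∑ j ∈ Finset.range (F.natDegree + 1), (F.coeff j : ℝ) * Real.exp (t * j))
      = Polynomial.aeval (Real.exp t) F := by
  rw [Polynomial.aeval_def, Polynomial.eval₂_eq_eval_map]
  rw [Polynomial.eval_eq_sum_range' (Nat.lt_succ_of_le Polynomial.natDegree_map_le)]
  refine Finset.sum_congr rfl fun j _ => ?_
  rw [Polynomial.coeff_map]
  rw [show (Real.exp t) ^ j = Real.exp ((j:ℝ) * t) from (Real.exp_nat_mul t j).symm]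
  rw [mul_comm (j:ℝ) t]
  rfl

lemma qInt_aeval (n : ℕ) (x : ℝ) :
    Polynomial.aeval x (qInt n) = ∑ j ∈ Finset.range n, x ^ j := by
  simp [qInt]

lemma main_identity (hF : F * ∏ i, qInt (b i) = ∏ i, qInt (a i)) (t : ℝ) :
    (Polynomial.aeval (Real.exp t) F : ℝ) * ∏ i, ((b i : ℝ) * G ((b i : ℝ) * t))
      = ∏ i, ((a i : ℝ) * G ((a i : ℝ) * t)) := by
  set x := Real.exp t
  have h0 : (Polynomial.aeval x F : ℝ) * ∏ i, (∑ j ∈ Finset.range (b i), x ^ j)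
      = ∏ i, (∑ j ∈ Finset.range (a i), x ^ j) := by
    have h := congrArg (fun p => (Polynomial.aeval x p : ℝ)) hF
    simpa [map_mul, map_prod, qInt_aeval] using h
  have hGb : ∏ i, ((b i : ℝ) * G ((b i : ℝ) * t))
      = ∏ i, (G t * (∑ j ∈ Finset.range (b i), x ^ j)) :=
    Finset.prod_congr rfl fun i _ => (G_fact (b i) t).symm
  have hGa : ∏ i, ((a i : ℝ) * G ((a i : ℝ) * t))
      = ∏ i, (G t * (∑ j ∈ Finset.range (a i), x ^ j)) :=
    Finset.prod_congr rfl fun i _ => (G_fact (a i) t).symm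
  rw [hGb, hGa, Finset.prod_mul_distrib, Finset.prod_mul_distrib, Finset.prod_const, ← h0]
  ring

end main

lemma eval_one_eq {k : ℕ} (a b : Fin k → ℕ) (F : Polynomial ℚ)
    (hF : F * ∏ i, qInt (b i) = ∏ i, qInt (a i)) :
    ((F.eval 1 : ℚ) : ℝ) * ∏ i, (b i : ℝ) = ∏ i, (a i : ℝ) := by
  have h := congrArg (fun p => Polynomial.eval (1:ℚ) p) hF
  simp only [Polynomial.eval_mul, Polynomial.eval_prod, qInt_eval_one] at h
  have := congrArg (fun q : ℚ => (q : ℝ)) h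
  push_cast at this
  exact this

lemma L_scale_contDiff (c : ℝ) : ContDiff ℝ ∞ (fun t => L (c * t)) :=
  L_contDiff.comp (contDiff_const.mul contDiff_id)

theorem key_result (k : ℕ) (a b : Fin k → ℕ) (ha : ∀ i, 0 < a i) (hb : ∀ i, 0 < b i)
    (F : Polynomial ℚ)
    (hF : F * ∏ i, qInt (b i) = ∏ i, qInt (a i))
    (r : ℕ) (hr : 1 ≤ r) :
    polyCumulant r F
      = ((bernoulli' r : ℝ) / r) * ∑ i, (((a i : ℝ)) ^ r - ((b i : ℝ)) ^ r) := by
  have hPb : ∀ t : ℝ, 0 < ∏ i, ((b i : ℝ) * G ((b i : ℝ) * t)) := fun t =>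
    Finset.prod_pos fun i _ => mul_pos (by exact_mod_cast hb i) (G_pos _)
  have hPa : ∀ t : ℝ, 0 < ∏ i, ((a i : ℝ) * G ((a i : ℝ) * t)) := fun t =>
    Finset.prod_pos fun i _ => mul_pos (by exact_mod_cast ha i) (G_pos _)
  have hA : ∀ t : ℝ, 0 < (Polynomial.aeval (Real.exp t) F : ℝ) := by
    intro t
    have h := main_identity a b F hF t
    have : (Polynomial.aeval (Real.exp t) F : ℝ)
        = (∏ i, ((a i : ℝ) * G ((a i : ℝ) * t))) / ∏ i, ((b i : ℝ) * G ((b i : ℝ) * t)) := by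
      rw [eq_div_iff (hPb t).ne', h]
    rw [this]
    exact div_pos (hPa t) (hPb t)
  have hprodb : (0:ℝ) < ∏ i, (b i : ℝ) :=
    Finset.prod_pos fun i _ => by exact_mod_cast hb i
  have hproda : (0:ℝ) < ∏ i, (a i : ℝ) :=
    Finset.prod_pos fun i _ => by exact_mod_cast ha i
  have heval1 : ((F.eval 1 : ℚ) : ℝ) = (∏ i, (a i : ℝ)) / ∏ i, (b i : ℝ) := by
    rw [eq_div_iff hprodb.ne', eval_one_eq a b F hF]
  have hcgf : polyCGF F = fun t => ∑ i, (L ((a i : ℝ) * t) - L ((b i : ℝ) * t)) := by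
    funext t
    rw [polyCGF, Sval_eq]
    have h := main_identity a b F hF t
    have hAeq : (Polynomial.aeval (Real.exp t) F : ℝ)
        = (∏ i, ((a i : ℝ) * G ((a i : ℝ) * t))) / ∏ i, ((b i : ℝ) * G ((b i : ℝ) * t)) := by
      rw [eq_div_iff (hPb t).ne', h]
    rw [hAeq, Real.log_div (hPa t).ne' (hPb t).ne', heval1,
      Real.log_div hproda.ne' hprodb.ne']
    rw [Real.log_prod (fun i _ => (mul_pos (by exact_mod_cast ha i) (G_pos _)).ne'),
      Real.log_prod (fun i _ => (mul_pos (by exact_mod_cast hb i) (G_pos _)).ne'),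
      Real.log_prod (fun i _ => by have := ha i; positivity),
      Real.log_prod (fun i _ => by have := hb i; positivity)]
    have hla : ∀ i ∈ Finset.univ (α := Fin k),
        Real.log ((a i : ℝ) * G ((a i : ℝ) * t))
          = Real.log (a i : ℝ) + L ((a i : ℝ) * t) := fun i _ =>
      Real.log_mul (by have := ha i; positivity) (G_pos _).ne'
    have hlb : ∀ i ∈ Finset.univ (α := Fin k),
        Real.log ((b i : ℝ) * G ((b i : ℝ) * t))
          = Real.log (b i : ℝ) + L ((b i : ℝ) * t) := fun i _ =>
      Real.log_mul (by have := hb i; positivity) (G_pos _).ne'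
    rw [Finset.sum_congr rfl hla, Finset.sum_congr rfl hlb,
      Finset.sum_add_distrib, Finset.sum_add_distrib, Finset.sum_sub_distrib]
    ring
  rw [polyCumulant, hcgf]
  rw [itD_sum Finset.univ _ (fun i _ =>
    ContDiff.sub (L_scale_contDiff _) (L_scale_contDiff _)) r 0]
  have hterm : ∀ i ∈ Finset.univ (α := Fin k),
      iteratedDeriv r (fun t => L ((a i : ℝ) * t) - L ((b i : ℝ) * t)) 0
        = ((a i : ℝ))^r * ((bernoulli' r : ℝ) / r) - ((b i : ℝ))^r * ((bernoulli' r : ℝ) / r) := by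
    intro i _
    rw [itD_sub (L_scale_contDiff _) (L_scale_contDiff _) 0]
    have hc : ∀ c : ℝ, iteratedDeriv r (fun t => L (c * t)) 0 = c^r * ((bernoulli' r : ℝ) / r) := by
      intro c
      rw [iteratedDeriv_comp_const_mul (contDiff_nat_of_infty L_contDiff r) c]
      simp only [mul_zero]
      rw [itD_L r hr]
    rw [hc, hc]
  rw [Finset.sum_congr rfl hterm, Finset.mul_sum]
  refine Finset.sum_congr rfl fun i _ => ?_
  ring

theorem stmt_6 (k : ℕ) (a b : Fin k → ℕ) (ha : ∀ i, 0 < a i) (hb : ∀ i, 0 < b i)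
    (F : Polynomial ℚ)
    (hF : F * ∏ i, qInt (b i) = ∏ i, qInt (a i))
    (hpos : ∀ j, 0 ≤ F.coeff j)
    (r : ℕ) (hr : 1 ≤ r) :
    polyCumulant r F
      = ((bernoulli' r : ℝ) / r) * ∑ i, (((a i : ℝ)) ^ r - ((b i : ℝ)) ^ r) :=
  key_result k a b ha hb F hF r hr
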